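/- Let H(t) be the laser Hamiltonian H(t) = (ω/2)(2a†a + σ³) + i(α(t)a† - conj(α(t))a) + i(conj(β(t))σ⁻ - β(t)σ⁺) on ℓ²(ℤ₊) ⊗ ℂ². For every finitely supported x, ‖H(t)x‖² ≤ K·max(1, |α(t)|², |β(t)|²)·(‖x‖² + ‖Nx‖²) for a constant K depending only on ω, where N = a†a. -/

import Mathlib

noncomputable def annOp (f : ℕ → Fin 2 → ℂ) : ℕ → Fin 2 → ℂ :=
  fun n i => ((Real.sqrt (n + 1) : ℝ) : ℂ) * f (n + 1) i

noncomputable def creOp (f : ℕ → Fin 2 → ℂ) : ℕ → Fin 2 → ℂ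
  | 0, _ => 0
  | n + 1, i => ((Real.sqrt (n + 1) : ℝ) : ℂ) * f n i

def spOp (f : ℕ → Fin 2 → ℂ) : ℕ → Fin 2 → ℂ :=
  fun n i => if i = 0 then f n 1 else 0

def smOp (f : ℕ → Fin 2 → ℂ) : ℕ → Fin 2 → ℂ :=
  fun n i => if i = 1 then f n 0 else 0

def s3Op (f : ℕ → Fin 2 → ℂ) : ℕ → Fin 2 → ℂ :=
  fun n i => if i = 0 then f n i else -f n i

/-- The number operator `N = a†a`. -/
def numOp (f : ℕ → Fin 2 → ℂ) : ℕ → Fin 2 → ℂ :=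
  fun n i => (n : ℂ) * f n i

noncomputable def ip (f g : ℕ → Fin 2 → ℂ) : ℂ :=
  ∑' n : ℕ, ∑ i : Fin 2, (starRingEnd ℂ) (f n i) * g n i

/-- The Hamiltonian `H(t) = (ω/2)(2a†a + σ³) + i(αa† - conj(α)a) + i(conj(β)σ⁻ - βσ⁺)`. -/
noncomputable def laserH (ω : ℝ) (α β : ℂ) (f : ℕ → Fin 2 → ℂ) : ℕ → Fin 2 → ℂ :=
  fun n i =>
    ((ω / 2 : ℝ) : ℂ) * (2 * (n : ℂ) * f n i + s3Op f n i) +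
      Complex.I * (α * creOp f n i - (starRingEnd ℂ) α * annOp f n i) +
      Complex.I * ((starRingEnd ℂ) β * smOp f n i - β * spOp f n i)

lemma ip_re_eq (g : ℕ → Fin 2 → ℂ) (M : ℕ) (hg : ∀ n, M ≤ n → ∀ i, g n i = 0) :
    (ip g g).re = ∑ n ∈ Finset.range M, ∑ i : Fin 2, ‖g n i‖ ^ 2 := by
  have h1 : ∀ n, ∑ i : Fin 2, (starRingEnd ℂ) (g n i) * g n i
      = ((∑ i : Fin 2, ‖g n i‖ ^ 2 : ℝ) : ℂ) := by
    intro n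
    push_cast
    refine Finset.sum_congr rfl fun i _ => ?_
    rw [Complex.conj_mul']
  unfold ip
  rw [tsum_eq_sum (s := Finset.range M) ?_]
  · rw [Complex.re_sum]
    refine Finset.sum_congr rfl fun n _ => ?_
    rw [h1 n, Complex.ofReal_re]
  · intro n hn
    have hz : ∀ i, g n i = 0 := hg n (by simpa using hn)
    simp [hz]

lemma abs5 (a b c d e : ℂ) : ‖a + b + c + d + e‖ ^ 2 ≤
    5 * (‖a‖ ^ 2 + ‖b‖ ^ 2 + ‖c‖ ^ 2 +
      ‖d‖ ^ 2 + ‖e‖ ^ 2) := by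
  have h : ‖a + b + c + d + e‖ ≤
      ‖a‖ + ‖b‖ + ‖c‖ + ‖d‖ + ‖e‖ := by
    calc ‖a + b + c + d + e‖ ≤ ‖a + b + c + d‖ + ‖e‖ :=
          norm_add_le _ _
      _ ≤ ‖a + b + c‖ + ‖d‖ + ‖e‖ := by
          have := norm_add_le (a + b + c) d; linarith
      _ ≤ ‖a + b‖ + ‖c‖ + ‖d‖ + ‖e‖ := by
          have := norm_add_le (a + b) c; linarith
      _ ≤ ‖a‖ + ‖b‖ + ‖c‖ + ‖d‖ + ‖e‖ := by
          have := norm_add_le a b; linarith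
  have h0 := norm_nonneg (a + b + c + d + e)
  nlinarith [sq_nonneg (‖a‖ - ‖b‖), sq_nonneg (‖a‖ - ‖c‖),
    sq_nonneg (‖a‖ - ‖d‖), sq_nonneg (‖a‖ - ‖e‖),
    sq_nonneg (‖b‖ - ‖c‖), sq_nonneg (‖b‖ - ‖d‖),
    sq_nonneg (‖b‖ - ‖e‖), sq_nonneg (‖c‖ - ‖d‖),
    sq_nonneg (‖c‖ - ‖e‖), sq_nonneg (‖d‖ - ‖e‖)]

lemma cre_sq (f : ℕ → Fin 2 → ℂ) (n : ℕ) (i : Fin 2) :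
    ‖creOp f (n + 1) i‖ ^ 2 = ((n : ℝ) + 1) * ‖f n i‖ ^ 2 := by
  show ‖((Real.sqrt (n + 1) : ℝ) : ℂ) * f n i‖ ^ 2 = _
  rw [norm_mul, mul_pow, Complex.norm_real, Real.norm_eq_abs, abs_of_nonneg (Real.sqrt_nonneg _),
    Real.sq_sqrt (by positivity)]

lemma ann_sq (f : ℕ → Fin 2 → ℂ) (n : ℕ) (i : Fin 2) :
    ‖annOp f n i‖ ^ 2 = ((n : ℝ) + 1) * ‖f (n + 1) i‖ ^ 2 := by
  show ‖((Real.sqrt (n + 1) : ℝ) : ℂ) * f (n + 1) i‖ ^ 2 = _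
  rw [norm_mul, mul_pow, Complex.norm_real, Real.norm_eq_abs, abs_of_nonneg (Real.sqrt_nonneg _),
    Real.sq_sqrt (by positivity)]

/-- Relative bound of the laser Hamiltonian with respect to the number operator:
`‖H(t)x‖² ≤ K max(1,|α|²,|β|²)(‖x‖² + ‖Nx‖²)` with `K` depending only on `ω`. -/
theorem laserH_relatively_bounded (ω : ℝ) :
    ∃ K : ℝ, ∀ (α β : ℂ) (f : ℕ → Fin 2 → ℂ), (Function.support f).Finite →
      (ip (laserH ω α β f) (laserH ω α β f)).re ≤
        K * max 1 (max (‖α‖ ^ 2) (‖β‖ ^ 2)) *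
          ((ip f f).re + (ip (numOp f) (numOp f)).re) := by
  refine ⟨5 * (2 * ω ^ 2 + 4), ?_⟩
  intro α β f hf
  set B := hf.toFinset.sup id + 1 with hB
  have hfB : ∀ n, B ≤ n → ∀ i, f n i = 0 := by
    intro n hn i
    by_contra h
    have hns : n ∈ Function.support f := fun h0 => h (by rw [h0]; rfl)
    have h2 := Finset.le_sup (f := id) (hf.mem_toFinset.2 hns)
    simp only [id] at h2
    omega
  have hfM : ∀ n, B + 3 ≤ n → ∀ i, f n i = 0 := fun n hn i => hfB n (by omega) i
  have hHM : ∀ n, B + 3 ≤ n → ∀ i, laserH ω α β f n i = 0 := by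
    intro n hn i
    obtain ⟨m, rfl⟩ : ∃ m, n = m + 1 := ⟨n - 1, by omega⟩
    have h1 : ∀ j, f (m + 1) j = 0 := fun j => hfB _ (by omega) j
    have h2 : ∀ j, f m j = 0 := fun j => hfB _ (by omega) j
    have h3 : ∀ j, f (m + 2) j = 0 := fun j => hfB _ (by omega) j
    simp [laserH, s3Op, smOp, spOp, annOp, creOp, h1, h2, h3]
  have hNM : ∀ n, B + 3 ≤ n → ∀ i, numOp f n i = 0 := by
    intro n hn i; simp [numOp, hfM n hn i]
  rw [ip_re_eq _ (B + 3) hHM, ip_re_eq f (B + 3) hfM, ip_re_eq _ (B + 3) hNM]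
  set M := B + 3 with hM
  set q : ℕ → ℝ := fun n => ∑ i : Fin 2, ‖f n i‖ ^ 2 with hq
  have hq0 : ∀ n, 0 ≤ q n := fun n => Finset.sum_nonneg fun i _ => sq_nonneg _
  -- numOp sum
  have hSN : ∀ n, (∑ i : Fin 2, ‖numOp f n i‖ ^ 2) = (n : ℝ) ^ 2 * q n := by
    intro n
    rw [hq, Finset.mul_sum]
    refine Finset.sum_congr rfl fun i _ => ?_
    simp [numOp, norm_mul, mul_pow, Complex.norm_natCast]
  set S0 : ℝ := ∑ n ∈ Finset.range M, q n with hS0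
  set SN : ℝ := ∑ n ∈ Finset.range M, (n : ℝ) ^ 2 * q n with hSNdef
  have hS0nn : 0 ≤ S0 := Finset.sum_nonneg fun n _ => hq0 n
  have hSNnn : 0 ≤ SN := Finset.sum_nonneg fun n _ => mul_nonneg (sq_nonneg _) (hq0 n)
  -- cre sum bound
  have hScre : (∑ n ∈ Finset.range M, ∑ i : Fin 2, ‖creOp f n i‖ ^ 2) ≤ S0 + SN := by
    have e1 : (∑ n ∈ Finset.range M, ∑ i : Fin 2, ‖creOp f n i‖ ^ 2)
        = ∑ n ∈ Finset.range (B + 2), ((n : ℝ) + 1) * q n := by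
      rw [show M = (B + 2) + 1 from rfl, Finset.sum_range_succ']
      simp only [cre_sq]
      have : (∑ i : Fin 2, ‖creOp f 0 i‖ ^ 2) = 0 := by
        simp [creOp]
      rw [this, add_zero]
      refine Finset.sum_congr rfl fun n _ => ?_
      rw [hq, Finset.mul_sum]
    rw [e1, hS0, hSNdef, ← Finset.sum_add_distrib]
    refine le_trans (Finset.sum_le_sum (fun n _ => ?_)) (Finset.sum_le_sum_of_subset_of_nonneg
      (Finset.range_subset_range.2 (by omega)) (fun n _ _ => by positivity))
    have hn2 : (n : ℝ) ≤ (n : ℝ) ^ 2 := by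
      have := Nat.le_self_pow (two_ne_zero) n
      exact_mod_cast this
    nlinarith [hq0 n]
  -- ann sum bound
  have hSann : (∑ n ∈ Finset.range M, ∑ i : Fin 2, ‖annOp f n i‖ ^ 2) ≤ S0 + SN := by
    have e1 : (∑ n ∈ Finset.range M, ∑ i : Fin 2, ‖annOp f n i‖ ^ 2)
        = ∑ m ∈ Finset.range (M + 1), (m : ℝ) * q m := by
      rw [Finset.sum_range_succ' (fun m => (m : ℝ) * q m) M]
      simp only [Nat.cast_zero, zero_mul, add_zero, Nat.cast_add, Nat.cast_one]
      refine Finset.sum_congr rfl fun n _ => ?_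
      simp only [ann_sq]
      rw [hq, Finset.mul_sum]
    rw [e1, Finset.sum_range_succ]
    have hqM : q M = 0 := by
      rw [hq]
      simp [hfM M le_rfl]
    rw [hqM, mul_zero, add_zero, hS0, hSNdef, ← Finset.sum_add_distrib]
    refine Finset.sum_le_sum fun n _ => ?_
    have hn2 : (n : ℝ) ≤ (n : ℝ) ^ 2 := by
      have := Nat.le_self_pow (two_ne_zero) n
      exact_mod_cast this
    nlinarith [hq0 n]
  -- pointwise bound
  have hpt : ∀ n ∈ Finset.range M, (∑ i : Fin 2, ‖laserH ω α β f n i‖ ^ 2) ≤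
      5 * (ω ^ 2 * ((n : ℝ) ^ 2 * q n) + (ω / 2) ^ 2 * q n
        + ‖α‖ ^ 2 * (∑ i : Fin 2, ‖creOp f n i‖ ^ 2)
        + ‖α‖ ^ 2 * (∑ i : Fin 2, ‖annOp f n i‖ ^ 2)
        + ‖β‖ ^ 2 * q n) := by
    intro n _
    simp only [hq, Fin.sum_univ_two]
    have key : ∀ i : Fin 2, ∀ w : ℂ,
        laserH ω α β f n i = ((ω : ℂ) * (n : ℂ) * f n i) + (((ω / 2 : ℝ) : ℂ) * s3Op f n i)
          + (Complex.I * α * creOp f n i) + (-(Complex.I * (starRingEnd ℂ) α * annOp f n i))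
          + (Complex.I * ((starRingEnd ℂ) β * smOp f n i - β * spOp f n i)) := by
      intro i w
      unfold laserH
      push_cast
      ring
    have h0 := abs5 ((ω : ℂ) * (n : ℂ) * f n 0) (((ω / 2 : ℝ) : ℂ) * s3Op f n 0)
      (Complex.I * α * creOp f n 0) (-(Complex.I * (starRingEnd ℂ) α * annOp f n 0))
      (Complex.I * ((starRingEnd ℂ) β * smOp f n 0 - β * spOp f n 0))
    have h1 := abs5 ((ω : ℂ) * (n : ℂ) * f n 1) (((ω / 2 : ℝ) : ℂ) * s3Op f n 1)
      (Complex.I * α * creOp f n 1) (-(Complex.I * (starRingEnd ℂ) α * annOp f n 1))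
      (Complex.I * ((starRingEnd ℂ) β * smOp f n 1 - β * spOp f n 1))
    rw [← key 0 0] at h0
    rw [← key 1 0] at h1
    -- simplify the individual abs values
    have ea : ∀ i : Fin 2, ‖(ω : ℂ) * (n : ℂ) * f n i‖ ^ 2
        = ω ^ 2 * ((n : ℝ) ^ 2 * ‖f n i‖ ^ 2) := by
      intro i
      rw [norm_mul, norm_mul, Complex.norm_real, Real.norm_eq_abs, Complex.norm_natCast, mul_pow, mul_pow, sq_abs]
      ring
    have eb : ∀ i : Fin 2, ‖((ω / 2 : ℝ) : ℂ) * s3Op f n i‖ ^ 2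
        = (ω / 2) ^ 2 * ‖f n i‖ ^ 2 := by
      intro i
      rw [norm_mul, Complex.norm_real, Real.norm_eq_abs, mul_pow, sq_abs]
      congr 1
      fin_cases i <;> simp [s3Op]
    have ec : ∀ i : Fin 2, ‖Complex.I * α * creOp f n i‖ ^ 2
        = ‖α‖ ^ 2 * ‖creOp f n i‖ ^ 2 := by
      intro i
      rw [norm_mul, norm_mul, Complex.norm_I, one_mul, mul_pow]
    have ed : ∀ i : Fin 2, ‖-(Complex.I * (starRingEnd ℂ) α * annOp f n i)‖ ^ 2
        = ‖α‖ ^ 2 * ‖annOp f n i‖ ^ 2 := by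
      intro i
      rw [norm_neg, norm_mul, norm_mul, Complex.norm_I, one_mul, Complex.norm_conj, mul_pow]
    have ee0 : ‖Complex.I * ((starRingEnd ℂ) β * smOp f n 0 - β * spOp f n 0)‖ ^ 2
        = ‖β‖ ^ 2 * ‖f n 1‖ ^ 2 := by
      have h : Complex.I * ((starRingEnd ℂ) β * smOp f n 0 - β * spOp f n 0)
          = -(Complex.I * (β * f n 1)) := by
        simp only [smOp, spOp]
        norm_num
      rw [h, norm_neg, norm_mul, norm_mul, Complex.norm_I, one_mul, mul_pow]
    have ee1 : ‖Complex.I * ((starRingEnd ℂ) β * smOp f n 1 - β * spOp f n 1)‖ ^ 2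
        = ‖β‖ ^ 2 * ‖f n 0‖ ^ 2 := by
      have h : Complex.I * ((starRingEnd ℂ) β * smOp f n 1 - β * spOp f n 1)
          = Complex.I * ((starRingEnd ℂ) β * f n 0) := by
        simp only [smOp, spOp]
        norm_num
      rw [h, norm_mul, norm_mul, Complex.norm_I, one_mul, Complex.norm_conj, mul_pow]
    rw [ea 0, eb 0, ec 0, ed 0, ee0] at h0
    rw [ea 1, eb 1, ec 1, ed 1, ee1] at h1
    linarith
  have hsum := Finset.sum_le_sum hpt
  refine le_trans hsum ?_
  have expand : (∑ n ∈ Finset.range M, 5 * (ω ^ 2 * ((n : ℝ) ^ 2 * q n) + (ω / 2) ^ 2 * q n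
        + ‖α‖ ^ 2 * (∑ i : Fin 2, ‖creOp f n i‖ ^ 2)
        + ‖α‖ ^ 2 * (∑ i : Fin 2, ‖annOp f n i‖ ^ 2)
        + ‖β‖ ^ 2 * q n))
      = 5 * (ω ^ 2 * SN + (ω / 2) ^ 2 * S0
        + ‖α‖ ^ 2 * (∑ n ∈ Finset.range M, ∑ i : Fin 2, ‖creOp f n i‖ ^ 2)
        + ‖α‖ ^ 2 * (∑ n ∈ Finset.range M, ∑ i : Fin 2, ‖annOp f n i‖ ^ 2)
        + ‖β‖ ^ 2 * S0) := by
    rw [hS0, hSNdef]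
    simp only [Finset.mul_sum, ← Finset.sum_add_distrib]
  rw [expand]
  have hRHS : (∑ n ∈ Finset.range M, ∑ i : Fin 2, ‖numOp f n i‖ ^ 2) = SN := by
    rw [hSNdef]; exact Finset.sum_congr rfl fun n _ => hSN n
  rw [hRHS]
  set Mx := max 1 (max (‖α‖ ^ 2) (‖β‖ ^ 2)) with hMx
  have hMx1 : (1 : ℝ) ≤ Mx := le_max_left _ _
  have hMxa : ‖α‖ ^ 2 ≤ Mx := le_trans (le_max_left _ _) (le_max_right _ _)
  have hMxb : ‖β‖ ^ 2 ≤ Mx := le_trans (le_max_right _ _) (le_max_right _ _)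
  set Scre := ∑ n ∈ Finset.range M, ∑ i : Fin 2, ‖creOp f n i‖ ^ 2 with hScredef
  set Sann := ∑ n ∈ Finset.range M, ∑ i : Fin 2, ‖annOp f n i‖ ^ 2 with hSanndef
  have hScnn : 0 ≤ Scre := Finset.sum_nonneg fun n _ => Finset.sum_nonneg fun i _ => sq_nonneg _
  have hSann0 : 0 ≤ Sann := Finset.sum_nonneg fun n _ => Finset.sum_nonneg fun i _ => sq_nonneg _
  have ha0 : (0:ℝ) ≤ ‖α‖ ^ 2 := sq_nonneg _
  have hb0 : (0:ℝ) ≤ ‖β‖ ^ 2 := sq_nonneg _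
  have hw0 : (0:ℝ) ≤ ω ^ 2 := sq_nonneg _
  nlinarith [mul_le_mul_of_nonneg_left hScre ha0, mul_le_mul_of_nonneg_left hSann ha0,
    mul_le_mul_of_nonneg_right hMxa (add_nonneg hS0nn hSNnn),
    mul_le_mul_of_nonneg_right hMxb (add_nonneg hS0nn hSNnn),
    mul_le_mul_of_nonneg_right hMx1 (add_nonneg hS0nn hSNnn),
    mul_nonneg hw0 (add_nonneg hS0nn hSNnn),
    mul_le_mul_of_nonneg_left (mul_le_mul_of_nonneg_right hMx1 (add_nonneg hS0nn hSNnn)) hw0]
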